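/- Let G = (V, E_G) be a simple graph and κ, τ ∈ ℕ. Construct the training data set over features {d_v : v ∈ V}: for each edge uv ∈ E_G, one red example with value 0 in d_u and in d_v and value 1 in all other features; and τ + 1 blue examples with value 1 in every feature. Fix an ordering v_1, …, v_n of V and let T be the decision tree whose cuts c_1, …, c_n form a path, where c_i has feature d_{v_i} and threshold −1, the left child of every c_i is a leaf labeled red, the right child of c_i is c_{i+1} for i < n, and the right child of c_n is a leaf labeled blue. Then there exists S ⊆ V with |S| ≤ κ such that at most τ edges of G have no endpoint in S if and only if the Threshold Adjustment instance ((E, λ), T, κ, τ) is a yes-instance. -/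

import Mathlib

/-- The two class labels. -/
def blue : Bool := true

def red : Bool := false

/-- Decision trees with features of type `α`: each leaf carries a class label,
each internal node (a *cut*) carries a feature and a real threshold. -/
inductive DTree (α : Type) : Type
  | leaf (label : Bool) : DTree α
  | node (feat : α) (thr : ℝ) (left right : DTree α) : DTree α

namespace DTree

/-- The class that the tree assigns to the example `e`. -/
noncomputable def classify {α : Type} : DTree α → (α → ℝ) → Bool
  | leaf c, _ => c
  | node f x l r, e => if e f ≤ x then l.classify e else r.classify e

end DTree

/-- The number of errors of `T` on the training data set `(E, lab)`. -/
noncomputable def errorCount {α ι : Type} [Fintype ι] (E : ι → α → ℝ)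
    (lab : ι → Bool) (T : DTree α) : ℕ :=
  (Finset.univ.filter (fun i => T.classify (E i) ≠ lab i)).card

/-- `T'` has the same shape as `T` and the same feature at every cut; thresholds and
leaf labels may differ. -/
def SameShapeFeat {α : Type} : DTree α → DTree α → Prop
  | DTree.leaf _, DTree.leaf _ => True
  | DTree.node f _ l r, DTree.node f' _ l' r' =>
      f = f' ∧ SameShapeFeat l l' ∧ SameShapeFeat r r'
  | _, _ => False

/-- The number of cuts at which the thresholds of the two (same-shaped) trees
differ. -/
noncomputable def adjCost {α : Type} : DTree α → DTree α → ℕ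
  | DTree.node _ x l r, DTree.node _ x' l' r' =>
      (if x = x' then 0 else 1) + adjCost l l' + adjCost r r'
  | _, _ => 0

/-- The Threshold Adjustment instance `((E, lab), T, k, t)` is a yes-instance. -/
def TAYes {α ι : Type} [Fintype ι] (E : ι → α → ℝ) (lab : ι → Bool)
    (T : DTree α) (k t : ℕ) : Prop :=
  ∃ T' : DTree α, SameShapeFeat T T' ∧ adjCost T T' ≤ k ∧ errorCount E lab T' ≤ t

/-- The path-shaped decision tree whose cuts use the listed features (in order), all
with threshold `thr`; the left child of every cut is a red leaf, the right child of
the last cut is a blue leaf. -/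
def chainTree {α : Type} (thr : ℝ) : List α → DTree α
  | [] => DTree.leaf blue
  | f :: fs => DTree.node f thr (DTree.leaf red) (chainTree thr fs)

section Aux

open DTree

variable {α : Type}

/-- Path-shaped tree with arbitrary thresholds and leaf labels. -/
def mkChain (x : α → ℝ) (lab : α → Bool) (last : Bool) : List α → DTree α
  | [] => DTree.leaf last
  | f :: fs => DTree.node f (x f) (DTree.leaf (lab f)) (mkChain x lab last fs)

lemma sameShapeFeat_mkChain (x : α → ℝ) (lab : α → Bool) (last : Bool) (thr : ℝ) :
    ∀ L : List α, SameShapeFeat (chainTree thr L) (mkChain x lab last L)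
  | [] => trivial
  | _ :: fs => ⟨rfl, trivial, sameShapeFeat_mkChain x lab last thr fs⟩

lemma adjCost_mkChain (x : α → ℝ) (lab : α → Bool) (last : Bool) :
    ∀ L : List α,
      adjCost (chainTree (-1 : ℝ) L) (mkChain x lab last L)
        = (L.filter (fun v => x v ≠ -1)).length
  | [] => rfl
  | f :: fs => by
      have ih := adjCost_mkChain x lab last fs
      by_cases h : x f = -1 <;>
        simp [mkChain, chainTree, adjCost, ih, h, eq_comm, List.filter_cons,
          Nat.add_comm]

lemma classify_mkChain_congr (x : α → ℝ) (lab : α → Bool) (last : Bool) :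
    ∀ (L : List α) (e e' : α → ℝ),
      (∀ f ∈ L, (e f ≤ x f ↔ e' f ≤ x f)) →
      (mkChain x lab last L).classify e = (mkChain x lab last L).classify e'
  | [], _, _, _ => rfl
  | f :: fs, e, e', h => by
      have h1 := h f (by simp)
      have ih := classify_mkChain_congr x lab last fs e e'
        (fun g hg => h g (by simp [hg]))
      by_cases hc : e f ≤ x f
      · simp [mkChain, DTree.classify, hc, h1.1 hc]
      · have hc' : ¬ e' f ≤ x f := fun h' => hc (h1.2 h')
        simp [mkChain, DTree.classify, hc, hc', ih]

lemma classify_mkChain_right (x : α → ℝ) (lab : α → Bool) (last : Bool) :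
    ∀ (L : List α) (e : α → ℝ), (∀ f ∈ L, ¬ e f ≤ x f) →
      (mkChain x lab last L).classify e = last
  | [], _, _ => rfl
  | f :: fs, e, h => by
      have h1 := h f (by simp)
      have ih := classify_mkChain_right x lab last fs e
        (fun g hg => h g (by simp [hg]))
      simp [mkChain, DTree.classify, h1, ih]

lemma classify_mkChain_red (x : α → ℝ) (last : Bool) :
    ∀ (L : List α) (e : α → ℝ), (∃ f ∈ L, e f ≤ x f) →
      (mkChain x (fun _ => red) last L).classify e = red
  | f :: fs, e, h => by
      by_cases hc : e f ≤ x f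
      · simp [mkChain, DTree.classify, hc]
      · obtain ⟨g, hg, hge⟩ := h
        have hgfs : g ∈ fs := by
          rcases List.mem_cons.1 hg with rfl | h' 
          · exact absurd hge hc
          · exact h'
        have ih := classify_mkChain_red x last fs e ⟨g, hgfs, hge⟩
        simp [mkChain, DTree.classify, hc, ih]

lemma mkChain_congrOn (x x' : α → ℝ) (lab lab' : α → Bool) (last : Bool) :
    ∀ L : List α, (∀ v ∈ L, x v = x' v) → (∀ v ∈ L, lab v = lab' v) →
      mkChain x lab last L = mkChain x' lab' last L
  | [], _, _ => rfl
  | f :: fs, hx, hl => by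
      have ih := mkChain_congrOn x x' lab lab' last fs
        (fun v hv => hx v (by simp [hv])) (fun v hv => hl v (by simp [hv]))
      simp [mkChain, hx f (by simp), hl f (by simp), ih]

lemma exists_mkChain_of_sameShapeFeat [DecidableEq α] (thr : ℝ) :
    ∀ (L : List α), L.Nodup → ∀ T' : DTree α, SameShapeFeat (chainTree thr L) T' →
      ∃ (x : α → ℝ) (lab : α → Bool) (last : Bool), T' = mkChain x lab last L
  | [], _, DTree.leaf c, _ => ⟨fun _ => thr, fun _ => red, c, rfl⟩
  | [], _, DTree.node _ _ _ _, hs => (by exact hs.elim : _)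
  | f :: fs, hnd, DTree.leaf _, hs => (by exact hs.elim : _)
  | f :: fs, hnd, DTree.node f' x0 l r, hs => by
      obtain ⟨hf, hl, hr⟩ := hs
      obtain ⟨b, rfl⟩ : ∃ b, l = DTree.leaf b := by
        cases l with
        | leaf b => exact ⟨b, rfl⟩
        | node _ _ _ _ => exact hl.elim
      obtain ⟨x, lab, last, rfl⟩ :=
        exists_mkChain_of_sameShapeFeat thr fs (List.Nodup.of_cons hnd) r hr
      refine ⟨Function.update x f x0, Function.update lab f b, last, ?_⟩
      have hfns : f ∉ fs := (List.nodup_cons.1 hnd).1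
      have : mkChain (Function.update x f x0) (Function.update lab f b) last fs
          = mkChain x lab last fs := by
        refine mkChain_congrOn _ _ _ _ _ fs (fun v hv => ?_) (fun v hv => ?_) <;>
          exact Function.update_of_ne (fun h => hfns (by rw [← h]; exact hv)) _ _
      simp [mkChain, this, ← hf, Function.update_self]

end Aux

open Classical in
/-- Partial-vertex-cover reduction. For a simple graph `G` on `V`:
one red example per edge (value `0` at the two endpoint features, value `1`
elsewhere), and `τ + 1` blue examples with all values `1`; the tree is the path of
cuts with features `d_{v_1}, …, d_{v_n}` (an enumeration `L` of `V`) and threshold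
`−1`. Then there is `S ⊆ V` with `|S| ≤ κ` leaving at most `τ` edges uncovered if and
only if `((E, λ), T, κ, τ)` is a yes-instance of Threshold Adjustment. -/
theorem stmt12 {V : Type} [Fintype V] [DecidableEq V] (G : SimpleGraph V)
    [DecidableRel G.Adj] (κ τ : ℕ)
    (L : List V) (hnd : L.Nodup) (hall : ∀ v : V, v ∈ L) :
    (∃ S : Finset V, S.card ≤ κ ∧
        (G.edgeFinset.filter (fun e => ∀ v ∈ S, v ∉ e)).card ≤ τ) ↔
    TAYes (ι := {e : Sym2 V // e ∈ G.edgeFinset} ⊕ Fin (τ + 1))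
      (Sum.elim (fun es (v : V) => if v ∈ es.1 then (0 : ℝ) else 1)
        (fun _ (_ : V) => 1))
      (Sum.elim (fun _ => red) (fun _ => blue))
      (chainTree (-1) L) κ τ := by
  classical
  constructor
  · rintro ⟨S, hScard, hScov⟩
    set x : V → ℝ := fun v => if v ∈ S then (1/2 : ℝ) else -1 with hx
    refine ⟨mkChain x (fun _ => red) blue L,
      sameShapeFeat_mkChain _ _ _ _ L, ?_, ?_⟩
    · rw [adjCost_mkChain]
      have hsub : (L.filter (fun v => x v ≠ -1)).toFinset ⊆ S := by
        intro v hv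
        rw [List.mem_toFinset, List.mem_filter] at hv
        by_contra hvS
        have : x v = -1 := by simp [hx, hvS]
        simp [this] at hv
      calc (L.filter (fun v => x v ≠ -1)).length
          = (L.filter (fun v => x v ≠ -1)).toFinset.card :=
            (List.toFinset_card_of_nodup (hnd.filter _)).symm
        _ ≤ S.card := Finset.card_le_card hsub
        _ ≤ κ := hScard
    · set uncov := G.edgeFinset.filter (fun e => ∀ v ∈ S, v ∉ e) with huncov
      set emb : {e // e ∈ uncov} ↪
          ({e : Sym2 V // e ∈ G.edgeFinset} ⊕ Fin (τ + 1)) :=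
        ⟨fun p => Sum.inl ⟨p.1, (Finset.mem_filter.1 p.2).1⟩,
         by
          intro a b h
          simp only [Sum.inl.injEq, Subtype.mk.injEq] at h
          exact Subtype.ext h⟩
        with hemb
      rw [errorCount]
      have hsub : Finset.univ.filter
          (fun i => (mkChain x (fun _ => red) blue L).classify
            ((Sum.elim (fun es (v : V) => if v ∈ es.1 then (0 : ℝ) else 1)
              (fun _ (_ : V) => 1)) i) ≠
            (Sum.elim (fun _ => red) (fun _ => blue)) i) ⊆ uncov.attach.map emb := by
        intro i hi
        simp only [Finset.mem_filter, Finset.mem_univ, true_and] at hi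
        match i with
        | Sum.inr j =>
          exfalso
          apply hi
          have : (mkChain x (fun _ => red) blue L).classify (fun _ => (1:ℝ))
              = blue := by
            apply classify_mkChain_right
            intro f _
            simp only [hx]
            split <;> norm_num
          simpa using this
        | Sum.inl es =>
          have hmem : es.1 ∈ uncov := by
            rw [huncov, Finset.mem_filter]
            refine ⟨es.2, ?_⟩
            intro v hvS hve
            apply hi
            have : (mkChain x (fun _ => red) blue L).classify
                (fun w => if w ∈ es.1 then (0:ℝ) else 1) = red := by
              apply classify_mkChain_red
              refine ⟨v, hall v, ?_⟩
              simp [hve, hx, hvS]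
            simpa using this
          refine Finset.mem_map.2 ⟨⟨es.1, hmem⟩, Finset.mem_attach _ _, ?_⟩
          simp only [hemb, Function.Embedding.coeFn_mk]
          rfl
      calc _ ≤ (uncov.attach.map emb).card := Finset.card_le_card hsub
        _ = uncov.card := by rw [Finset.card_map, Finset.card_attach]
        _ ≤ τ := hScov
  · rintro ⟨T', hshape, hcost, herr⟩
    obtain ⟨x, lab, last, rfl⟩ :=
      exists_mkChain_of_sameShapeFeat (-1) L hnd T' hshape
    rw [adjCost_mkChain] at hcost
    set S : Finset V := (L.filter (fun v => 0 ≤ x v)).toFinset with hS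
    refine ⟨S, ?_, ?_⟩
    · calc S.card = (L.filter (fun v => 0 ≤ x v)).length :=
            List.toFinset_card_of_nodup (hnd.filter _)
        _ ≤ (L.filter (fun v => x v ≠ -1)).length := by
            rw [← List.countP_eq_length_filter, ← List.countP_eq_length_filter]
            apply List.countP_mono_left
            intro v _ h0
            simp only [decide_eq_true_eq] at h0 ⊢
            intro h; rw [h] at h0; norm_num at h0
        _ ≤ κ := hcost
    · have hblue : (mkChain x lab last L).classify (fun _ => (1:ℝ)) = blue := by
        by_contra hc
        have hsub : (Finset.univ.map
            ⟨Sum.inr, Sum.inr_injective⟩ :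
              Finset ({e : Sym2 V // e ∈ G.edgeFinset} ⊕ Fin (τ + 1))) ⊆
            Finset.univ.filter
              (fun i => (mkChain x lab last L).classify
                ((Sum.elim (fun es (v : V) => if v ∈ es.1 then (0 : ℝ) else 1)
                  (fun _ (_ : V) => 1)) i) ≠
                (Sum.elim (fun _ => red) (fun _ => blue)) i) := by
          intro i hi
          obtain ⟨j, _, rfl⟩ := Finset.mem_map.1 hi
          simp only [Finset.mem_filter, Finset.mem_univ, true_and,
            Function.Embedding.coeFn_mk, Sum.elim_inr]
          exact hc
        have := Finset.card_le_card hsub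
        rw [Finset.card_map, Finset.card_univ, Fintype.card_fin] at this
        rw [errorCount] at herr
        omega
      set uncov := G.edgeFinset.filter (fun e => ∀ v ∈ S, v ∉ e) with huncov
      set emb : {e // e ∈ uncov} ↪
          ({e : Sym2 V // e ∈ G.edgeFinset} ⊕ Fin (τ + 1)) :=
        ⟨fun p => Sum.inl ⟨p.1, (Finset.mem_filter.1 p.2).1⟩,
         by
          intro a b h
          simp only [Sum.inl.injEq, Subtype.mk.injEq] at h
          exact Subtype.ext h⟩
        with hemb
      have hsub : uncov.attach.map emb ⊆ Finset.univ.filter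
          (fun i => (mkChain x lab last L).classify
            ((Sum.elim (fun es (v : V) => if v ∈ es.1 then (0 : ℝ) else 1)
              (fun _ (_ : V) => 1)) i) ≠
            (Sum.elim (fun _ => red) (fun _ => blue)) i) := by
        intro i hi
        obtain ⟨⟨e, he⟩, _, rfl⟩ := Finset.mem_map.1 hi
        obtain ⟨he', hu⟩ := Finset.mem_filter.1 he
        simp only [Finset.mem_filter, Finset.mem_univ, true_and, hemb,
          Function.Embedding.coeFn_mk, Sum.elim_inl]
        have hxneg : ∀ v ∈ e, ¬ (0:ℝ) ≤ x v := by
          intro v hv h0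
          exact hu v (by
            rw [hS, List.mem_toFinset, List.mem_filter]
            exact ⟨hall v, by simpa using h0⟩) hv
        have hcongr : (mkChain x lab last L).classify
            (fun w => if w ∈ e then (0:ℝ) else 1)
            = (mkChain x lab last L).classify (fun _ => (1:ℝ)) := by
          apply classify_mkChain_congr
          intro f _
          by_cases hf : f ∈ e
          · simp only [hf, if_true]
            constructor
            · intro h; exact absurd h (hxneg f hf)
            · intro h; exact absurd (le_trans (by norm_num) h) (hxneg f hf)
          · simp [hf]
        show (mkChain x lab last L).classify (fun w => if w ∈ e then (0:ℝ) else 1) ≠ red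
        rw [hcongr, hblue]
        simp [red, blue]
      calc uncov.card = (uncov.attach.map emb).card := by
            rw [Finset.card_map, Finset.card_attach]
        _ ≤ _ := Finset.card_le_card hsub
        _ ≤ τ := by rw [errorCount] at herr; exact herr
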